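/- For n ≥ 2, let M be the n×n binary 2D string with M[i][j] = 1 if (i = j and i ≤ n−1) or j = n, and M[i][j] = 0 otherwise (the (n−1)×(n−1) identity matrix with a row of 0's appended at the bottom and then a column of 1's appended at the right). Then P_M(k₁,k₂) ≤ 3(k₁+k₂) for all 1 ≤ k₁,k₂ ≤ n; hence δ(M) ≤ 6. -/

import Mathlib

/-!
Statement 15: For `n ≥ 2`, let `M` be the `n × n` binary 2D string with
`M[i][j] = 1` iff (`i = j` and `i ≤ n−1`, 1-based) or `j = n`; i.e., 0-based,
`M i j = 1` iff (`i = j ∧ i < n−1`) or `j = n−1`: the `(n−1) × (n−1)` identity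
matrix with a row of `0`'s appended at the bottom and a column of `1`'s appended
at the right.  Then `P_M(k₁,k₂) ≤ 3(k₁+k₂)` for all `1 ≤ k₁,k₂ ≤ n`; hence
`δ(M) ≤ 6`.
-/

/-- The `k₁ × k₂` factor of the 2D string `M` with top-left corner `(i, j)` (0-based). -/
def factorAt {α : Type*} (M : ℕ → ℕ → α) (k₁ k₂ i j : ℕ) : Fin k₁ → Fin k₂ → α :=
  fun a b => M (i + a) (j + b)

/-- `P_M(k₁,k₂)`: the number of distinct `k₁ × k₂` factors of the `m × n` 2D string `M`. -/
def numFactors {α : Type*} [DecidableEq α] (M : ℕ → ℕ → α) (m n k₁ k₂ : ℕ) : ℕ :=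
  ((Finset.range (m - k₁ + 1) ×ˢ Finset.range (n - k₂ + 1)).image
    (fun p => factorAt M k₁ k₂ p.1 p.2)).card

/-- `δ(M) = max{ P_M(k₁,k₂)/(k₁·k₂) : 1 ≤ k₁ ≤ m, 1 ≤ k₂ ≤ n }`. -/
def deltaMeasure {α : Type*} [DecidableEq α] (M : ℕ → ℕ → α) (m n : ℕ) : ℚ≥0 :=
  ((Finset.Icc 1 m) ×ˢ (Finset.Icc 1 n)).sup
    (fun p => (numFactors M m n p.1 p.2 : ℚ≥0) / ((p.1 * p.2 : ℕ) : ℚ≥0))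

/-- The identity matrix bordered below by `0`'s and on the right by `1`'s (0-based). -/
def idBordered (n : ℕ) : ℕ → ℕ → Bool :=
  fun i j => decide ((i = j ∧ i < n - 1) ∨ j = n - 1)

/-- signature map -/
def sigFn (n k₁ k₂ : ℕ) (p : ℕ × ℕ) : ℤ × Bool × Bool :=
  (max (-(k₁:ℤ)) (min (k₂:ℤ) ((p.1:ℤ) - (p.2:ℤ))),
   decide (p.1 = n - k₁), decide (p.2 = n - k₂))

/-- factor reconstructed from signature -/
def Ffn (k₁ k₂ : ℕ) (s : ℤ × Bool × Bool) : Fin k₁ → Fin k₂ → Bool :=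
  fun a b => decide (((((b:ℕ):ℤ) = ((a:ℕ):ℤ) + s.1) ∧ (s.2.1 = true → (a:ℕ) ≠ k₁ - 1)
      ∧ (s.2.2 = true → (b:ℕ) ≠ k₂ - 1)) ∨ (s.2.2 = true ∧ (b:ℕ) = k₂ - 1))

lemma key (n k₁ k₂ i j : ℕ) (hn : 2 ≤ n) (hk₁ : 1 ≤ k₁) (hk₁n : k₁ ≤ n) (hk₂ : 1 ≤ k₂)
    (hk₂n : k₂ ≤ n) (hi : i + k₁ ≤ n) (hj : j + k₂ ≤ n) :
    factorAt (idBordered n) k₁ k₂ i j = Ffn k₁ k₂ (sigFn n k₁ k₂ (i, j)) := by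
  funext a b
  have ha := a.isLt
  have hb := b.isLt
  simp only [factorAt, idBordered, Ffn, sigFn, decide_eq_decide, decide_eq_true_eq]
  omega

noncomputable def sigSet (k₁ k₂ : ℕ) : Finset (ℤ × Bool × Bool) :=
  ((Finset.Icc (-(k₁:ℤ)) k₂).image (fun e => (e, false, false)))
  ∪ ((Finset.Icc ((k₂:ℤ) - k₁ + 1) k₂).image (fun e => (e, true, false)))
  ∪ ((Finset.Icc (-(k₁:ℤ)) ((k₂:ℤ) - k₁ - 1)).image (fun e => (e, false, true)))
  ∪ {((k₂:ℤ) - k₁, true, true)}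

lemma sig_mem (n k₁ k₂ i j : ℕ) (hk₁ : 1 ≤ k₁) (hk₁n : k₁ ≤ n) (hk₂ : 1 ≤ k₂)
    (hk₂n : k₂ ≤ n) (hi : i + k₁ ≤ n) (hj : j + k₂ ≤ n) :
    sigFn n k₁ k₂ (i, j) ∈ sigSet k₁ k₂ := by
  unfold sigSet
  by_cases hi1 : i = n - k₁ <;> by_cases hj1 : j = n - k₂
  · apply Finset.mem_union_right
    rw [Finset.mem_singleton]
    simp [sigFn, hi1, hj1, Prod.ext_iff]
    omega
  · apply Finset.mem_union_left
    apply Finset.mem_union_left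
    apply Finset.mem_union_right
    rw [Finset.mem_image]
    refine ⟨max (-(k₁:ℤ)) (min (k₂:ℤ) ((i:ℤ) - (j:ℤ))), ?_, ?_⟩
    · rw [Finset.mem_Icc]; omega
    · simp [sigFn, hi1, hj1, Prod.ext_iff]
  · apply Finset.mem_union_left
    apply Finset.mem_union_right
    rw [Finset.mem_image]
    refine ⟨max (-(k₁:ℤ)) (min (k₂:ℤ) ((i:ℤ) - (j:ℤ))), ?_, ?_⟩
    · rw [Finset.mem_Icc]; omega
    · simp [sigFn, hi1, hj1, Prod.ext_iff]
  · apply Finset.mem_union_left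
    apply Finset.mem_union_left
    apply Finset.mem_union_left
    rw [Finset.mem_image]
    refine ⟨max (-(k₁:ℤ)) (min (k₂:ℤ) ((i:ℤ) - (j:ℤ))), ?_, ?_⟩
    · rw [Finset.mem_Icc]; omega
    · simp [sigFn, hi1, hj1, Prod.ext_iff]

lemma sigSet_card (k₁ k₂ : ℕ) (hk₁ : 1 ≤ k₁) (hk₂ : 1 ≤ k₂) :
    (sigSet k₁ k₂).card ≤ 3 * (k₁ + k₂) := by
  have h1 := Finset.card_image_le (s := Finset.Icc (-(k₁:ℤ)) k₂)
    (f := fun e => (e, false, false))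
  have h2 := Finset.card_image_le (s := Finset.Icc ((k₂:ℤ) - k₁ + 1) k₂)
    (f := fun e => (e, true, false))
  have h3 := Finset.card_image_le (s := Finset.Icc (-(k₁:ℤ)) ((k₂:ℤ) - k₁ - 1))
    (f := fun e => (e, false, true))
  rw [Int.card_Icc] at h1 h2 h3
  calc (sigSet k₁ k₂).card
      ≤ _ + _ + _ + 1 := by
        refine le_trans (Finset.card_union_le _ _) ?_
        refine add_le_add (le_trans (Finset.card_union_le _ _)
          (add_le_add (le_trans (Finset.card_union_le _ _) (add_le_add h1 h2)) h3)) ?_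
        simp
    _ ≤ 3 * (k₁ + k₂) := by omega

theorem statement15 (n : ℕ) (hn : 2 ≤ n) :
    (∀ k₁ k₂, 1 ≤ k₁ → k₁ ≤ n → 1 ≤ k₂ → k₂ ≤ n →
      numFactors (idBordered n) n n k₁ k₂ ≤ 3 * (k₁ + k₂)) ∧
    deltaMeasure (idBordered n) n n ≤ 6 := by
  have main : ∀ k₁ k₂, 1 ≤ k₁ → k₁ ≤ n → 1 ≤ k₂ → k₂ ≤ n →
      numFactors (idBordered n) n n k₁ k₂ ≤ 3 * (k₁ + k₂) := by
    intro k₁ k₂ h1 h2 h3 h4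
    unfold numFactors
    have himg : ((Finset.range (n - k₁ + 1) ×ˢ Finset.range (n - k₂ + 1)).image
        (fun p => factorAt (idBordered n) k₁ k₂ p.1 p.2))
        = ((Finset.range (n - k₁ + 1) ×ˢ Finset.range (n - k₂ + 1)).image
            (sigFn n k₁ k₂)).image (Ffn k₁ k₂) := by
      rw [Finset.image_image]
      refine Finset.image_congr ?_
      intro p hp
      simp only [Finset.mem_coe, Finset.mem_product, Finset.mem_range] at hp
      have := key n k₁ k₂ p.1 p.2 hn h1 h2 h3 h4 (by omega) (by omega)
      simpa using this
    rw [himg]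
    refine le_trans (Finset.card_image_le) (le_trans (Finset.card_le_card ?_)
      (sigSet_card k₁ k₂ h1 h3))
    intro x hx
    simp only [Finset.mem_image, Finset.mem_product, Finset.mem_range] at hx
    obtain ⟨p, ⟨hp1, hp2⟩, rfl⟩ := hx
    have : sigFn n k₁ k₂ (p.1, p.2) ∈ sigSet k₁ k₂ :=
      sig_mem n k₁ k₂ p.1 p.2 h1 h2 h3 h4 (by omega) (by omega)
    simpa using this
  refine ⟨main, ?_⟩
  unfold deltaMeasure
  refine Finset.sup_le ?_
  intro p hp
  simp only [Finset.mem_product, Finset.mem_Icc] at hp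
  obtain ⟨⟨h1, h2⟩, h3, h4⟩ := hp
  have hpos : (0:ℚ≥0) < ((p.1 * p.2 : ℕ) : ℚ≥0) := by
    have : 0 < p.1 * p.2 := Nat.mul_pos h1 h3
    exact_mod_cast this
  rw [div_le_iff₀ hpos]
  have hnat : numFactors (idBordered n) n n p.1 p.2 ≤ 6 * (p.1 * p.2) := by
    have := main p.1 p.2 h1 h2 h3 h4
    have e1 : p.1 ≤ p.1 * p.2 := Nat.le_mul_of_pos_right _ h3
    have e2 : p.2 ≤ p.1 * p.2 := Nat.le_mul_of_pos_left _ h1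
    omega
  calc (numFactors (idBordered n) n n p.1 p.2 : ℚ≥0)
      ≤ ((6 * (p.1 * p.2) : ℕ) : ℚ≥0) := by exact_mod_cast hnat
    _ = 6 * ((p.1 * p.2 : ℕ) : ℚ≥0) := by push_cast; ring
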